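/- arXiv:1702.01259 — 2 statements merged into one kernel-verified Lean document; each statement's English description precedes it below -/
import Mathlib

section
/- Let f(x) = a_m x^m + a_{m-1}x^{m-1} + ... + a_0 with m ≥ 0 and a_m ≠ 0 be a polynomial solution of f(x)f(x⁻¹) = (q-1)f̃(x) + q (with f̃ as in the Hecke quadratic relation: f̃ A-linear with f̃(xᵏ) = xᵏ + xᵏ⁻¹ + ... + x^{-k} for k ≥ 0). Then a_j = q - 1 for all 0 ≤ j ≤ m-1, and a_m satisfies a_m² = (q-1)a_m + q, i.e., a_m = -1 or a_m = q. -/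
set_option linter.unusedSectionVars false


open LaurentPolynomial

noncomputable section

variable (A : Type*) [CommRing A] [IsDomain A]

/-- The monomial values of the operator `f ↦ f̃`:
`x^k ↦ x^k + x^{k-1} + ⋯ + x^{-k}` for `k ≥ 0`, and
`x^k ↦ -(x^{k+1} + ⋯ + x^{-k-1})` for `k < 0`. -/
def tildeMon (k : ℤ) : A[T;T⁻¹] :=
  if 0 ≤ k then ∑ j ∈ Finset.Icc (-k) k, (T j : A[T;T⁻¹])
  else -(∑ j ∈ Finset.Icc (k + 1) (-(k + 1)), (T j : A[T;T⁻¹]))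

/-- The `A`-linear operator `f ↦ f̃` determined by its values on monomials. -/
def tilde (f : A[T;T⁻¹]) : A[T;T⁻¹] :=
  f.coeff.sum fun k a => a • tildeMon A k

variable {A}

lemma tildeMon_apply_of_nonneg {k : ℤ} (hk : 0 ≤ k) (n : ℤ) :
    (tildeMon A k).coeff n = if n ∈ Finset.Icc (-k) k then 1 else 0 := by
  rw [tildeMon, if_pos hk, AddMonoidAlgebra.coeff_sum, Finset.sum_apply']
  simp_rw [T_apply]
  rw [Finset.sum_ite_eq' (Finset.Icc (-k) k) n (fun _ => (1:A))]

lemma tilde_apply_of_supp {m : ℕ} {f : A[T;T⁻¹]}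
    (hsupp : f.coeff.support ⊆ Finset.Icc (0 : ℤ) (m : ℤ)) {n : ℤ} (hn : 0 ≤ n) :
    (tilde A f).coeff n = ∑ k ∈ Finset.Icc n (m : ℤ), f.coeff k := by
  classical
  rw [tilde, AddMonoidAlgebra.coeff_finsuppSum, Finsupp.sum_apply, Finsupp.sum]
  rw [Finset.sum_subset hsupp (fun i _ hi => by
    rw [Finsupp.notMem_support_iff.mp hi, zero_smul, AddMonoidAlgebra.coeff_zero, Finsupp.coe_zero, Pi.zero_apply])]
  have h1 : ∀ k ∈ Finset.Icc (0:ℤ) (m:ℤ), (f.coeff k • tildeMon A k).coeff n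
      = if n ≤ k then f.coeff k else 0 := by
    intro k hk
    rw [Finset.mem_Icc] at hk
    rw [AddMonoidAlgebra.coeff_smul_apply, tildeMon_apply_of_nonneg hk.1, smul_eq_mul]
    by_cases h : n ≤ k
    · rw [if_pos h, if_pos (Finset.mem_Icc.mpr ⟨by omega, h⟩), mul_one]
    · rw [if_neg h, if_neg (fun hc => h (Finset.mem_Icc.mp hc).2), mul_zero]
  rw [Finset.sum_congr rfl h1]
  rw [← Finset.sum_subset (Finset.Icc_subset_Icc_left hn)
    (fun k hk hk' => by rw [Finset.mem_Icc] at *; rw [if_neg (by omega)])]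
  exact Finset.sum_congr rfl fun k hk => by
    rw [Finset.mem_Icc] at hk; rw [if_pos hk.1]

lemma conv_apply {m : ℕ} {f : A[T;T⁻¹]}
    (hsupp : f.coeff.support ⊆ Finset.Icc (0 : ℤ) (m : ℤ)) (n : ℤ) :
    (f * LaurentPolynomial.invert f).coeff n = ∑ i ∈ Finset.Icc (0:ℤ) (m:ℤ), f.coeff i * f.coeff (i - n) := by
  classical
  rw [show (f * LaurentPolynomial.invert f).coeff n
      = ∑ i ∈ f.coeff.support, f.coeff i * (LaurentPolynomial.invert f).coeff (n - i) from by
    rw [AddMonoidAlgebra.coeff_mul, Finsupp.sum]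
    refine Finset.sum_congr rfl fun i _ => ?_
    rw [Finsupp.sum]
    simp_rw [show ∀ j : ℤ, (i + j = n) ↔ (j = n - i) from fun j => by omega]
    rw [Finset.sum_ite_eq' (LaurentPolynomial.invert f).coeff.support (n - i)
      (fun j => f.coeff i * (LaurentPolynomial.invert f).coeff j)]
    by_cases h : n - i ∈ (LaurentPolynomial.invert f).coeff.support
    · simp [h]
    · simp [h, Finsupp.notMem_support_iff.mp h]]
  simp_rw [LaurentPolynomial.invert_apply, neg_sub]
  exact Finset.sum_subset hsupp (fun i _ hi => by
    rw [Finsupp.notMem_support_iff.mp hi, zero_mul])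

variable (A)

/-- if `f(x) = a_m x^m + ⋯ + a_0` (a polynomial of degree `m ≥ 0`,
viewed as a Laurent polynomial supported in `[0, m]`, with leading coefficient
`a_m ≠ 0`) solves `f(x)f(x⁻¹) = (q-1)f̃(x) + q`, then `a_j = q - 1` for all
`0 ≤ j ≤ m - 1` and `a_m = -1` or `a_m = q`. -/
theorem coefficients_of_polynomial_hecke_solution (q : A) (m : ℕ) (f : A[T;T⁻¹])
    (hsupp : f.coeff.support ⊆ Finset.Icc (0 : ℤ) (m : ℤ))
    (hlead : f.coeff (m : ℤ) ≠ 0)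
    (hf : f * (LaurentPolynomial.invert f) = (q - 1) • tilde A f + C q) :
    (∀ j : ℤ, 0 ≤ j → j < (m : ℤ) → f.coeff j = q - 1) ∧ (f.coeff (m : ℤ) = -1 ∨ f.coeff (m : ℤ) = q) := by
  classical
  have hout : ∀ j : ℤ, j < 0 ∨ (m:ℤ) < j → f.coeff j = 0 := by
    intro j hj
    refine Finsupp.notMem_support_iff.mp (fun hc => ?_)
    have := Finset.mem_Icc.mp (hsupp hc); omega
  have E : ∀ n : ℤ, 0 ≤ n →
      ∑ i ∈ Finset.Icc (0:ℤ) (m:ℤ), f.coeff i * f.coeff (i - n)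
        = (q-1) * (∑ k ∈ Finset.Icc n (m:ℤ), f.coeff k) + (if n = 0 then q else 0) := by
    intro n hn
    have h := congrArg (fun p : A[T;T⁻¹] => p.coeff n) hf
    rw [conv_apply hsupp] at h
    rw [h, AddMonoidAlgebra.coeff_add, Finsupp.add_apply, AddMonoidAlgebra.coeff_smul_apply, smul_eq_mul,
      tilde_apply_of_supp hsupp hn, C_apply]
  have E' : ∀ n : ℤ, 0 ≤ n → n ≤ (m:ℤ) →
      ∑ i ∈ Finset.Icc n (m:ℤ), f.coeff i * f.coeff (i - n)
        = (q-1) * (∑ k ∈ Finset.Icc n (m:ℤ), f.coeff k) + (if n = 0 then q else 0) := by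
    intro n hn hnm
    rw [← E n hn]
    exact Finset.sum_subset (Finset.Icc_subset_Icc_left hn) (fun i hi hi' => by
      rw [Finset.mem_Icc] at hi hi'
      rw [hout (i - n) (Or.inl (by omega)), mul_zero])
  have key : ∀ r : ℕ, (r:ℤ) < (m:ℤ) → f.coeff (r:ℤ) = q - 1 := by
    intro r
    induction r using Nat.strong_induction_on with
    | _ r IH =>
      intro hr
      set n : ℤ := (m:ℤ) - r with hn
      have h := E' n (by omega) (by omega)
      rw [if_neg (by omega)] at h
      have hsplit : Finset.Icc n (m:ℤ) = insert (m:ℤ) (Finset.Icc n ((m:ℤ)-1)) := by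
        ext x; rw [Finset.mem_insert, Finset.mem_Icc, Finset.mem_Icc]; omega
      have hmem : (m:ℤ) ∉ Finset.Icc n ((m:ℤ)-1) := fun hc => by
        have := Finset.mem_Icc.mp hc; omega
      rw [hsplit, Finset.sum_insert hmem, Finset.sum_insert hmem] at h
      have hIH : ∀ i ∈ Finset.Icc n ((m:ℤ)-1), f.coeff i * f.coeff (i - n) = f.coeff i * (q-1) := by
        intro i hi
        rw [Finset.mem_Icc] at hi
        have h0 : 0 ≤ i - n := by omega
        have h1 := IH (i - n).toNat (by omega) (by omega)
        rw [Int.toNat_of_nonneg h0] at h1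
        rw [h1]
      rw [Finset.sum_congr rfl hIH,
        show (m:ℤ) - n = (r:ℤ) by omega] at h
      have hfin : f.coeff (m:ℤ) * (f.coeff (r:ℤ) - (q-1)) = 0 := by
        rw [← Finset.sum_mul] at h
        linear_combination h
      rcases mul_eq_zero.mp hfin with h1 | h1
      · exact absurd h1 hlead
      · exact sub_eq_zero.mp h1
  have main : ∀ j : ℤ, 0 ≤ j → j < (m:ℤ) → f.coeff j = q - 1 := by
    intro j h0 h1
    have := key j.toNat (by omega)
    rwa [Int.toNat_of_nonneg h0] at this
  refine ⟨main, ?_⟩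
  have h := E' 0 le_rfl (by positivity)
  rw [if_pos rfl] at h
  simp_rw [sub_zero] at h
  have hsplit : Finset.Icc (0:ℤ) (m:ℤ) = insert (m:ℤ) (Finset.Icc (0:ℤ) ((m:ℤ)-1)) := by
    ext x; rw [Finset.mem_insert, Finset.mem_Icc, Finset.mem_Icc]; omega
  have hmem : (m:ℤ) ∉ Finset.Icc (0:ℤ) ((m:ℤ)-1) := fun hc => by
    have := Finset.mem_Icc.mp hc; omega
  rw [hsplit, Finset.sum_insert hmem, Finset.sum_insert hmem] at h
  have hconst : ∀ i ∈ Finset.Icc (0:ℤ) ((m:ℤ)-1), f.coeff i = q - 1 := fun i hi => by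
    have := Finset.mem_Icc.mp hi; exact main i this.1 (by omega)
  rw [Finset.sum_congr rfl (fun i hi => by rw [hconst i hi]),
    Finset.sum_congr rfl hconst] at h
  simp only [Finset.sum_const, nsmul_eq_mul] at h
  have hq : (f.coeff (m:ℤ) + 1) * (f.coeff (m:ℤ) - q) = 0 := by linear_combination h
  rcases mul_eq_zero.mp hq with h1 | h1
  · exact Or.inl (eq_neg_of_add_eq_zero_left h1)
  · exact Or.inr (sub_eq_zero.mp h1)

end
end

section
/- Let p, κ ∈ ℂ and for 1 ≤ k ≤ n define the Jucys–Murphy-type elements JM_k = -p(s_{1,k} + s_{2,k} + ... + s_{k-1,k}) + κ in the group algebra ℂ[S_n] (with JM₁ = κ), where s_{j,k} denotes the transposition (j k). Then the assignment ε_k ↦ JM_k, t_w ↦ w defines a unital algebra homomorphism from the graded affine Hecke algebra ℍ_n of type GL_n with parameter p (generated by ℂ[S_n] and the polynomial algebra S(V_n) with V_n = span(ε₁,...,ε_n), subject to v·t_{s_α} - t_{s_α}·s_α(v) = p⟨v, α^∨⟩ for simple roots α) to ℂ[S_n]. -/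
noncomputable section

open Finset

/-- The simple transposition `s_j = (j, j+1)` in `S_n`. -/
def sj {n : ℕ} (j : ℕ) (hj : j + 1 < n) : Equiv.Perm (Fin n) :=
  Equiv.swap ⟨j, Nat.lt_of_succ_lt hj⟩ ⟨j + 1, hj⟩

/-- Generators of the graded affine Hecke algebra `ℍ_n` of type `GL_n`:
the basis vectors `ε_k` of `V_n` (left) and the group elements `t_w`,
`w ∈ S_n` (right). -/
abbrev GHGen (n : ℕ) := Fin n ⊕ Equiv.Perm (Fin n)

/-- The pairing `⟨ε_k, α_j^∨⟩` for the simple coroot `α_j^∨ = ε_j - ε_{j+1}`. -/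
def pairing {n : ℕ} (j : ℕ) (hj : j + 1 < n) (k : Fin n) : ℂ :=
  (if k = (⟨j, Nat.lt_of_succ_lt hj⟩ : Fin n) then 1 else 0) -
    (if k = (⟨j + 1, hj⟩ : Fin n) then 1 else 0)

/-- The defining relations of the graded affine Hecke algebra
`ℍ_n = ℍ(V_n, R_n, Δ_n, p)` of type `A_{n-1}`: `w ↦ t_w` is multiplicative
(an algebra embedding of `ℂ[S_n]`), the `ε_k` pairwise commute (an algebra
embedding of `S(V_n)`), and the cross relation
`v·t_{s_j} - t_{s_j}·s_j(v) = p·⟨v, α_j^∨⟩` holds. -/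
inductive GradedRel (n : ℕ) (p : ℂ) :
    FreeAlgebra ℂ (GHGen n) → FreeAlgebra ℂ (GHGen n) → Prop
  | group_mul (w w' : Equiv.Perm (Fin n)) :
      GradedRel n p
        (FreeAlgebra.ι ℂ (Sum.inr w) * FreeAlgebra.ι ℂ (Sum.inr w'))
        (FreeAlgebra.ι ℂ (Sum.inr (w * w')))
  | group_one : GradedRel n p (FreeAlgebra.ι ℂ (Sum.inr (1 : Equiv.Perm (Fin n)))) 1
  | poly_comm (k l : Fin n) :
      GradedRel n p
        (FreeAlgebra.ι ℂ (Sum.inl k) * FreeAlgebra.ι ℂ (Sum.inl l))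
        (FreeAlgebra.ι ℂ (Sum.inl l) * FreeAlgebra.ι ℂ (Sum.inl k))
  | cross (j : ℕ) (hj : j + 1 < n) (k : Fin n) :
      GradedRel n p
        (FreeAlgebra.ι ℂ (Sum.inl k) * FreeAlgebra.ι ℂ (Sum.inr (sj j hj)) -
          FreeAlgebra.ι ℂ (Sum.inr (sj j hj)) * FreeAlgebra.ι ℂ (Sum.inl ((sj j hj) k)))
        ((p * pairing j hj k) • 1)

/-- The graded affine Hecke algebra `ℍ_n` with parameter `p`, by generators
and relations. -/
abbrev GradedHecke (n : ℕ) (p : ℂ) := RingQuot (GradedRel n p)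

/-- The Jucys–Murphy-type element
`JM_k = -p(s_{1,k} + ⋯ + s_{k-1,k}) + κ ∈ ℂ[S_n]` (with `JM_1 = κ`). -/
def JM {n : ℕ} (p κ : ℂ) (k : Fin n) : MonoidAlgebra ℂ (Equiv.Perm (Fin n)) :=
  κ • 1 - p • ∑ j ∈ Finset.univ.filter (· < k),
    MonoidAlgebra.of ℂ (Equiv.Perm (Fin n)) (Equiv.swap j k)

namespace JMaux

open Finset Equiv

variable {n : ℕ}

abbrev og (w : Equiv.Perm (Fin n)) : MonoidAlgebra ℂ (Equiv.Perm (Fin n)) :=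
  MonoidAlgebra.of ℂ (Equiv.Perm (Fin n)) w

/-- The sum-of-transpositions part of the Jucys–Murphy element. -/
def X (k : Fin n) : MonoidAlgebra ℂ (Equiv.Perm (Fin n)) :=
  ∑ j ∈ Finset.univ.filter (· < k), og (Equiv.swap j k)

lemma JM_eq (p κ : ℂ) (k : Fin n) : JM p κ k = κ • 1 - p • X k := rfl

lemma swap_mul (σ : Equiv.Perm (Fin n)) (a b : Fin n) :
    σ * Equiv.swap a b = Equiv.swap (σ a) (σ b) * σ := by
  ext x; simp [Equiv.Perm.mul_apply, Equiv.swap_apply_apply]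

/-- If `σ` fixes `k` and preserves `{m : m < k}`, then `σ` commutes with `X k`. -/
lemma conj (k : Fin n) (σ : Equiv.Perm (Fin n)) (h0 : σ k = k)
    (h1 : ∀ m : Fin n, m < k → σ m < k) (h2 : ∀ m : Fin n, m < k → σ⁻¹ m < k) :
    og σ * X k = X k * og σ := by
  unfold X
  rw [Finset.mul_sum, Finset.sum_mul]
  have step : ∀ m : Fin n,
      og σ * og (Equiv.swap m k) = og (Equiv.swap (σ m) k) * og σ := by
    intro m
    rw [← map_mul, ← map_mul, swap_mul, h0]
  calc ∑ m ∈ Finset.univ.filter (· < k), og σ * og (Equiv.swap m k)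
      = ∑ m ∈ Finset.univ.filter (· < k), og (Equiv.swap (σ m) k) * og σ :=
        Finset.sum_congr rfl fun m _ => step m
    _ = ∑ m ∈ Finset.univ.filter (· < k), og (Equiv.swap m k) * og σ := by
        refine Finset.sum_bijective σ σ.bijective (fun i => ?_) (fun i _ => rfl)
        simp only [Finset.mem_filter, Finset.mem_univ, true_and]
        constructor
        · exact h1 i
        · intro h
          have := h2 _ h
          simpa using this

lemma X_comm (k l : Fin n) : X k * X l = X l * X k := by
  have key : ∀ k l : Fin n, l < k → X l * X k = X k * X l := by
    intro k l hlk
    unfold X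
    rw [Finset.sum_mul, Finset.mul_sum]
    refine Finset.sum_congr rfl fun m hm => ?_
    have hm' : m < l := by simpa using hm
    have hmk : m < k := hm'.trans hlk
    have h0 : Equiv.swap m l k = k :=
      Equiv.swap_apply_of_ne_of_ne (ne_of_gt hmk) (ne_of_gt hlk)
    have h1 : ∀ x : Fin n, x < k → Equiv.swap m l x < k := by
      intro x hx
      rcases eq_or_ne x m with rfl | hxm
      · rwa [Equiv.swap_apply_left]
      rcases eq_or_ne x l with rfl | hxl
      · rwa [Equiv.swap_apply_right]
      · rwa [Equiv.swap_apply_of_ne_of_ne hxm hxl]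
    exact conj k (Equiv.swap m l) h0 h1 (by simpa [Equiv.swap_inv] using h1)
  rcases lt_trichotomy k l with h | rfl | h
  · exact key l k h
  · rfl
  · exact (key k l h).symm

lemma JM_comm (p κ : ℂ) (k l : Fin n) : JM p κ k * JM p κ l = JM p κ l * JM p κ k := by
  have hX : Commute (X k) (X l) := X_comm k l
  have c11 : Commute ((κ:ℂ) • (1 : MonoidAlgebra ℂ (Equiv.Perm (Fin n)))) (κ • 1) :=
    ((Commute.refl 1).smul_left κ).smul_right κ
  have c12 : Commute ((κ:ℂ) • (1 : MonoidAlgebra ℂ (Equiv.Perm (Fin n)))) (p • X l) :=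
    ((Commute.one_left (X l)).smul_left κ).smul_right p
  have c21 : Commute (p • X k) ((κ:ℂ) • (1 : MonoidAlgebra ℂ (Equiv.Perm (Fin n)))) :=
    ((Commute.one_right (X k)).smul_left p).smul_right κ
  have c22 : Commute (p • X k) (p • X l) := (hX.smul_left p).smul_right p
  have : Commute (JM p κ k) (JM p κ l) := by
    rw [JM_eq, JM_eq]
    exact Commute.sub_left (Commute.sub_right c11 c12) (Commute.sub_right c21 c22)
  exact this

lemma cross_key (j : ℕ) (hj : j + 1 < n) (k : Fin n) :
    og (sj j hj) * X ((sj j hj) k) - X k * og (sj j hj) = (pairing j hj k) • 1 := by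
  set a : Fin n := ⟨j, Nat.lt_of_succ_lt hj⟩ with ha
  set b : Fin n := ⟨j + 1, hj⟩ with hb
  have hs : sj j hj = Equiv.swap a b := rfl
  have hab : a < b := by simp [Fin.lt_def, ha, hb]
  have hss : og (sj j hj) * og (sj j hj) = 1 := by
    rw [← map_mul, hs, Equiv.swap_mul_self]; exact map_one _
  have hfix : ∀ m : Fin n, m < a → (sj j hj) m = m := fun m hm => by
    rw [hs]; exact Equiv.swap_apply_of_ne_of_ne (ne_of_lt hm) (ne_of_lt (hm.trans hab))
  have hsplit : Finset.univ.filter (· < b) = insert a (Finset.univ.filter (· < a)) := by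
    ext m
    simp only [Finset.mem_filter, Finset.mem_univ, true_and, Finset.mem_insert]
    rw [Fin.lt_def, Fin.lt_def]
    simp only [hb, ha, Fin.ext_iff]
    omega
  have hanotin : a ∉ Finset.univ.filter (· < a) := by simp
  rcases eq_or_ne k a with rfl | hka
  · -- k = a
    have hsk : (sj j hj) a = b := by rw [hs]; exact Equiv.swap_apply_left a b
    have hpair : pairing j hj a = 1 := by
      simp [pairing, ← ha, ← hb, hab.ne]
    rw [hsk, hpair, one_smul]
    have hXb : X b = og (Equiv.swap a b) + ∑ m ∈ Finset.univ.filter (· < a),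
        og (Equiv.swap m b) := by
      unfold X; rw [hsplit, Finset.sum_insert hanotin]
    have hterm : ∀ m : Fin n, m < a →
        og (sj j hj) * og (Equiv.swap m b) = og (Equiv.swap m a) * og (sj j hj) := by
      intro m hm
      rw [← map_mul, ← map_mul, hs, swap_mul, Equiv.swap_apply_right]
      rw [← hs, hfix m hm]
    rw [hXb, mul_add]
    rw [show og (sj j hj) * og (Equiv.swap a b) = 1 from by rw [← hs]; exact hss]
    rw [Finset.mul_sum, Finset.sum_congr rfl (fun m hm => hterm m (by simpa using hm))]
    rw [← Finset.sum_mul]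
    unfold X
    abel
  rcases eq_or_ne k b with rfl | hkb
  · -- k = b
    have hsk : (sj j hj) b = a := by rw [hs]; exact Equiv.swap_apply_right a b
    have hpair : pairing j hj b = -1 := by
      simp [pairing, ← ha, ← hb, hab.ne']
    rw [hsk, hpair]
    have hterm : ∀ m : Fin n, m < a →
        og (sj j hj) * og (Equiv.swap m a) = og (Equiv.swap m b) * og (sj j hj) := by
      intro m hm
      rw [← map_mul, ← map_mul, hs, swap_mul, Equiv.swap_apply_left]
      rw [← hs, hfix m hm]
    have hXb : X b = og (Equiv.swap a b) + ∑ m ∈ Finset.univ.filter (· < a),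
        og (Equiv.swap m b) := by
      unfold X; rw [hsplit, Finset.sum_insert hanotin]
    have hleft : og (sj j hj) * X a
        = (∑ m ∈ Finset.univ.filter (· < a), og (Equiv.swap m b)) * og (sj j hj) := by
      unfold X
      rw [Finset.mul_sum, Finset.sum_mul]
      exact Finset.sum_congr rfl (fun m hm => hterm m (by simpa using hm))
    rw [hleft, hXb, add_mul]
    rw [show og (Equiv.swap a b) * og (sj j hj) = 1 from by rw [← hs]; exact hss]
    rw [neg_smul, one_smul]
    abel
  · -- k ≠ a, k ≠ b
    have hsk : (sj j hj) k = k := by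
      rw [hs]; exact Equiv.swap_apply_of_ne_of_ne hka hkb
    have hpair : pairing j hj k = 0 := by
      simp [pairing, ← ha, ← hb, hka, hkb]
    have h1 : ∀ m : Fin n, m < k → (sj j hj) m < k := by
      intro m hm
      rcases eq_or_ne m a with rfl | hma
      · rw [hs, Equiv.swap_apply_left]
        refine lt_of_le_of_ne ?_ (Ne.symm hkb)
        rw [Fin.le_def]
        have := Fin.lt_def.mp hm
        simp only [hb, ha] at *
        omega
      rcases eq_or_ne m b with rfl | hmb
      · rw [hs, Equiv.swap_apply_right]; exact hab.trans hm
      · rw [hs, Equiv.swap_apply_of_ne_of_ne hma hmb]; exact hm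
    have h2 : ∀ m : Fin n, m < k → (sj j hj)⁻¹ m < k := by
      intro m hm
      have : (sj j hj)⁻¹ = sj j hj := by rw [hs, Equiv.swap_inv]
      rw [this]; exact h1 m hm
    rw [hsk, hpair, zero_smul, conj k (sj j hj) hsk h1 h2, sub_self]

lemma cross_eq (p κ : ℂ) (j : ℕ) (hj : j + 1 < n) (k : Fin n) :
    JM p κ k * og (sj j hj) - og (sj j hj) * JM p κ ((sj j hj) k)
      = (p * pairing j hj k) • 1 := by
  have main : JM p κ k * og (sj j hj) - og (sj j hj) * JM p κ ((sj j hj) k)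
      = p • (og (sj j hj) * X ((sj j hj) k) - X k * og (sj j hj)) := by
    rw [JM_eq, JM_eq, sub_mul, mul_sub, smul_mul_assoc, smul_mul_assoc, one_mul,
        mul_smul_comm, mul_smul_comm, mul_one, smul_sub]
    abel
  rw [main, cross_key, smul_smul]

end JMaux

/-- the assignment `ε_k ↦ JM_k`, `t_w ↦ w` defines a unital
`ℂ`-algebra homomorphism from the graded affine Hecke algebra `ℍ_n` of type
`GL_n` with parameter `p` to the group algebra `ℂ[S_n]`. -/
theorem jucysMurphy_algHom (n : ℕ) (p κ : ℂ) :
    ∃ φ : GradedHecke n p →ₐ[ℂ] MonoidAlgebra ℂ (Equiv.Perm (Fin n)),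
      (∀ k : Fin n,
        φ (RingQuot.mkAlgHom ℂ (GradedRel n p) (FreeAlgebra.ι ℂ (Sum.inl k))) =
          JM p κ k) ∧
      (∀ w : Equiv.Perm (Fin n),
        φ (RingQuot.mkAlgHom ℂ (GradedRel n p) (FreeAlgebra.ι ℂ (Sum.inr w))) =
          MonoidAlgebra.of ℂ (Equiv.Perm (Fin n)) w) := by
  classical
  let f : GHGen n → MonoidAlgebra ℂ (Equiv.Perm (Fin n)) :=
    Sum.elim (JM p κ) (fun w => MonoidAlgebra.of ℂ (Equiv.Perm (Fin n)) w)
  let F : FreeAlgebra ℂ (GHGen n) →ₐ[ℂ] MonoidAlgebra ℂ (Equiv.Perm (Fin n)) :=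
    FreeAlgebra.lift ℂ f
  have hF : ∀ g, F (FreeAlgebra.ι ℂ g) = f g := fun g => FreeAlgebra.lift_ι_apply f g
  have hrel : ∀ ⦃x y : FreeAlgebra ℂ (GHGen n)⦄, GradedRel n p x y → F x = F y := by
    rintro x y (⟨w, w'⟩ | _ | ⟨k, l⟩ | ⟨j, hj, k⟩)
    · rw [map_mul, hF, hF, hF]
      exact (map_mul (MonoidAlgebra.of ℂ (Equiv.Perm (Fin n))) w w').symm
    · rw [hF, map_one]
      exact map_one (MonoidAlgebra.of ℂ (Equiv.Perm (Fin n)))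
    · rw [map_mul, map_mul, hF, hF]
      exact JMaux.JM_comm p κ k l
    · rw [map_sub, map_mul, map_mul, map_smul, map_one, hF, hF, hF]
      exact JMaux.cross_eq p κ j hj k
  refine ⟨RingQuot.liftAlgHom ℂ ⟨F, hrel⟩, fun k => ?_, fun w => ?_⟩
  · rw [RingQuot.liftAlgHom_mkAlgHom_apply, hF]; rfl
  · rw [RingQuot.liftAlgHom_mkAlgHom_apply, hF]; rfl

end
end
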